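/- Let L be a finite graded lattice of rank n ≥ 1 with H̃_{n-2}(Δ(L̄); k) ≠ 0. Then L has at least n coatoms c (elements of rank n-1) satisfying H̃_{n-3}(Δ(0̂,c); k) ≠ 0 (for n = 1 interpret the condition vacuously, the single coatom being 0̂). -/

import Mathlib

set_option maxSynthPendingDepth 2

open Finset

variable {α : Type*}

/-- A `j`-vertex simplex of the order complex of `s ⊆ α`: a strictly increasing
`j`-tuple of elements of `s` (for `j = 0` this is the unique empty simplex). -/
def OrderedSimplex [Preorder α] (s : Set α) (j : ℕ) : Type _ :=
  {f : Fin j → α // StrictMono f ∧ ∀ i, f i ∈ s}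

/-- The module of simplicial chains with `j` vertices (i.e. of degree `j - 1`)
of the order complex of `s`, with coefficients in `K`.  Since degree `j = 0`
corresponds to the empty simplex, this is the *augmented* chain complex. -/
abbrev SimpChains (K : Type*) [CommRing K] [Preorder α] (s : Set α) (j : ℕ) :=
  OrderedSimplex s j →₀ K

/-- The `i`-th face of a simplex (delete the `i`-th vertex). -/
def OrderedSimplex.face [Preorder α] {s : Set α} {j : ℕ}
    (σ : OrderedSimplex s (j + 1)) (i : Fin (j + 1)) : OrderedSimplex s j :=
  ⟨σ.1 ∘ Fin.succAbove i, σ.2.1.comp (Fin.strictMono_succAbove i), fun _ => σ.2.2 _⟩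

/-- The simplicial boundary map (for `j = 0` it is the augmentation). -/
noncomputable def simpBoundary (K : Type*) [CommRing K] [Preorder α] (s : Set α) (j : ℕ) :
    SimpChains K s (j + 1) →ₗ[K] SimpChains K s j :=
  Finsupp.lsum K fun σ => ∑ i : Fin (j + 1), ((-1 : K) ^ (i : ℕ)) • Finsupp.lsingle (σ.face i)

/-- Cycles with `j` vertices (for `j = 0` every chain is a cycle). -/
noncomputable def simpCycles (K : Type*) [CommRing K] [Preorder α] (s : Set α) :
    (j : ℕ) → Submodule K (SimpChains K s j)
  | 0 => ⊤
  | (i + 1) => LinearMap.ker (simpBoundary K s i)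

/-- Boundaries with `j` vertices. -/
noncomputable def simpBoundaries (K : Type*) [CommRing K] [Preorder α] (s : Set α) (j : ℕ) :
    Submodule K (SimpChains K s j) :=
  LinearMap.range (simpBoundary K s j)

/-- `ReducedHomology K s j` is the reduced simplicial homology group
`H̃_{j-1}(Δ(s); K)` of the order complex of `s` (the index `j` counts vertices,
so `j = 0` gives `H̃₋₁` and `j = n - 1` gives `H̃_{n-2}`). -/
noncomputable def ReducedHomology (K : Type*) [CommRing K] [Preorder α] (s : Set α) (j : ℕ) :=
  ↥(simpCycles K s j) ⧸ (simpBoundaries K s j).comap (simpCycles K s j).subtype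

noncomputable instance (K : Type*) [CommRing K] [Preorder α] (s : Set α) (j : ℕ) :
    AddCommGroup (ReducedHomology K s j) := by unfold ReducedHomology; infer_instance

noncomputable instance (K : Type*) [CommRing K] [Preorder α] (s : Set α) (j : ℕ) :
    Module K (ReducedHomology K s j) := by unfold ReducedHomology; infer_instance

/-- The proper part `L ∖ {⊥, ⊤}` of a bounded poset. -/
def properPart (α : Type*) [Preorder α] [BoundedOrder α] : Set α :=
  {x | x ≠ ⊥ ∧ x ≠ ⊤}

/-- The flag `f`-vector entry `f_P(S)`: the number of chains in the proper part
of `P` whose set of ranks is exactly `S`. -/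
noncomputable def flagf (α : Type*) [Preorder α] [BoundedOrder α] [GradeMinOrder ℕ α]
    (S : Finset ℕ) : ℕ :=
  Nat.card {C : Finset α // IsChain (· ≤ ·) (C : Set α) ∧ (↑C ⊆ properPart α) ∧
    C.image (grade ℕ) = S}

/-- The multinomial coefficient `α_n(S) = n! / (s₁!·(s₂-s₁)!⋯(n-s_l)!)`
for `S = {s₁ < s₂ < ⋯ < s_l} ⊆ [n-1]`; it equals `f_{B_n}(S)`. -/
def alphaMulti (n : ℕ) (S : Finset ℕ) : ℕ :=
  n.factorial /
    ((S.sort (· ≤ ·) ++ [n]).zipWith (fun b a => (b - a).factorial)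
      (0 :: S.sort (· ≤ ·))).prod

/-- An element `x` of a graded bounded poset is *good* if `x = ⊥` or the order
complex of the open interval `(⊥, x)` has nontrivial top reduced homology
`H̃_{ρ(x)-2}` over `K`. -/
def IsGoodElement (K : Type*) [CommRing K] [Preorder α] [OrderBot α] [GradeMinOrder ℕ α]
    (x : α) : Prop :=
  x = ⊥ ∨ Nontrivial (ReducedHomology K (Set.Ioo (⊥ : α) x) (grade ℕ x - 1))

section Aux

open OrderedSimplex

variable [Lattice α] [BoundedOrder α] [GradeMinOrder ℕ α]

lemma grade_bot' : grade ℕ (⊥ : α) = 0 :=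
  Nat.le_zero.mp ((IsMin.grade ℕ (isMin_bot : IsMin (⊥:α))) (Nat.zero_le _))

lemma fin_le_strictMono {k : ℕ} {f : Fin k → ℕ} (hf : StrictMono f) :
    ∀ i : Fin k, (i : ℕ) ≤ f i := by
  intro i
  rcases k with _ | k
  · exact i.elim0
  · induction i using Fin.induction with
    | zero => exact Nat.zero_le _
    | succ i ih =>
      have h1 := hf (Fin.castSucc_lt_succ : i.castSucc < i.succ)
      have h2 := ih
      simp only [Fin.coe_castSucc] at h2
      simp only [Fin.val_succ]
      omega

/-- In `n`-vertex chains of `(⊥, u)` with `grade u = n + 1`, the `i`-th vertex has grade `i+1`. -/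
lemma grade_pattern {u : α} {j : ℕ} (hu : grade ℕ u = j + 1)
    (σ : OrderedSimplex (Set.Ioo (⊥:α) u) j) (i : Fin j) : grade ℕ (σ.1 i) = (i : ℕ) + 1 := by
  have hpos : ∀ k : Fin j, 1 ≤ grade ℕ (σ.1 k) := by
    intro k
    have := grade_strictMono (α := α) (𝕆 := ℕ) (σ.2.2 k).1
    rw [grade_bot'] at this; omega
  have hlt : ∀ k : Fin j, grade ℕ (σ.1 k) < j + 1 := by
    intro k
    have := grade_strictMono (α := α) (𝕆 := ℕ) (σ.2.2 k).2
    omega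
  have hlow : (i : ℕ) + 1 ≤ grade ℕ (σ.1 i) := by
    have hsm : StrictMono (fun k : Fin j => grade ℕ (σ.1 k) - 1) := by
      intro a b hab
      show grade ℕ (σ.1 a) - 1 < grade ℕ (σ.1 b) - 1
      have h1 := grade_strictMono (α := α) (𝕆 := ℕ) (σ.2.1 hab)
      have := hpos a; have := hpos b; omega
    have h3 : (i : ℕ) ≤ grade ℕ (σ.1 i) - 1 := fin_le_strictMono hsm i
    have := hpos i; omega
  have hhigh : grade ℕ (σ.1 i) ≤ (i : ℕ) + 1 := by
    have hsm : StrictMono (fun k : Fin j => j - grade ℕ (σ.1 k.rev)) := by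
      intro a b hab
      show j - grade ℕ (σ.1 a.rev) < j - grade ℕ (σ.1 b.rev)
      have hrev : b.rev < a.rev := by
        simp only [Fin.lt_def, Fin.val_rev] at hab ⊢; omega
      have h1 := grade_strictMono (α := α) (𝕆 := ℕ) (σ.2.1 hrev)
      have := hlt a.rev; have := hlt b.rev; omega
    have h2 : (i.rev : ℕ) ≤ j - grade ℕ (σ.1 i.rev.rev) := fin_le_strictMono hsm i.rev
    simp only [Fin.rev_rev, Fin.val_rev] at h2
    have := hlt i; have := hpos i
    have hiv : (i : ℕ) < j := i.isLt
    omega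
  omega

/-- The top (last) vertex of a nonempty simplex. -/
def OrderedSimplex.top {s : Set α} {j : ℕ} (σ : OrderedSimplex s (j+1)) : α :=
  σ.1 (Fin.last j)

/-- The set of top vertices of the support of a chain. -/
noncomputable def topFinset {K : Type*} [CommRing K] {s : Set α} {j : ℕ}
    (z : SimpChains K s (j+1)) : Finset α :=
  haveI := Classical.decEq α
  z.support.image OrderedSimplex.top

/-- Weakening of the vertex set of a simplex. -/
def OrderedSimplex.mono {s t : Set α} (h : s ⊆ t) {j : ℕ} (σ : OrderedSimplex s j) :
    OrderedSimplex t j := ⟨σ.1, σ.2.1, fun i => h (σ.2.2 i)⟩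

lemma Ioo_bot_subset {c u : α} (hcu : c < u) : Set.Ioo (⊥:α) c ⊆ Set.Ioo (⊥:α) u :=
  fun x hx => ⟨hx.1, hx.2.trans hcu⟩

/-- Append a new top vertex `c` to a chain in `(⊥, c)`, landing in chains of `(⊥, u)`. -/
def appendMap {u c : α} (hc : c ∈ Set.Ioo (⊥:α) u) {j : ℕ}
    (τ : OrderedSimplex (Set.Ioo (⊥:α) c) j) : OrderedSimplex (Set.Ioo (⊥:α) u) (j+1) :=
  ⟨Fin.snoc (fun i => τ.1 i) c, by
    rw [Fin.strictMono_iff_lt_succ]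
    intro i
    rcases eq_or_ne i.succ (Fin.last j) with h | h
    · rw [h]
      simp only [Fin.snoc_castSucc, Fin.snoc_last]
      exact (τ.2.2 i).2
    · obtain ⟨k, hk⟩ := Fin.exists_castSucc_eq.mpr h
      rw [← hk]
      simp only [Fin.snoc_castSucc]
      refine τ.2.1 ?_
      have := congrArg Fin.val hk
      simp only [Fin.coe_castSucc, Fin.val_succ] at this
      rw [Fin.lt_def]; omega,
   by
    intro i
    induction i using Fin.lastCases with
    | last => simpa using hc
    | cast i =>
      simp only [Fin.snoc_castSucc]
      exact (Ioo_bot_subset hc.2) (τ.2.2 i)⟩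

lemma appendMap_injective {u c : α} (hc : c ∈ Set.Ioo (⊥:α) u) {j : ℕ} :
    Function.Injective (appendMap (α := α) hc (j := j)) := by
  intro τ τ' h
  apply Subtype.ext; funext i
  have := congrArg (fun σ : OrderedSimplex (Set.Ioo (⊥:α) u) (j+1) => σ.1 i.castSucc) h
  simpa [appendMap, Fin.snoc_castSucc] using this

@[simp] lemma appendMap_top {u c : α} (hc : c ∈ Set.Ioo (⊥:α) u) {j : ℕ}
    (τ : OrderedSimplex (Set.Ioo (⊥:α) c) j) : (appendMap hc τ).top = c := by
  simp [appendMap, OrderedSimplex.top, Fin.snoc_last]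

/-- Drop the top vertex of a simplex whose lower vertices lie in `(⊥, c)`. -/
def lowerMapAt {u c : α} {j : ℕ} (σ : OrderedSimplex (Set.Ioo (⊥:α) u) (j+1))
    (h : ∀ i : Fin j, σ.1 i.castSucc ∈ Set.Ioo (⊥:α) c) :
    OrderedSimplex (Set.Ioo (⊥:α) c) j :=
  ⟨fun i => σ.1 i.castSucc, fun a b hab => σ.2.1 (by exact_mod_cast hab), h⟩

lemma mem_Ioo_top {u : α} {j : ℕ} (σ : OrderedSimplex (Set.Ioo (⊥:α) u) (j+1))
    {c : α} (htop : σ.top = c) (i : Fin j) : σ.1 i.castSucc ∈ Set.Ioo (⊥:α) c :=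
  ⟨(σ.2.2 i.castSucc).1, htop ▸ σ.2.1 (Fin.castSucc_lt_last i)⟩

lemma appendMap_lowerMapAt {u c : α} {j : ℕ} (σ : OrderedSimplex (Set.Ioo (⊥:α) u) (j+1))
    (htop : σ.top = c) (hc : c ∈ Set.Ioo (⊥:α) u) :
    appendMap hc (lowerMapAt σ (mem_Ioo_top σ htop)) = σ := by
  apply Subtype.ext; funext i
  induction i using Fin.lastCases with
  | last => simp only [appendMap, Fin.snoc_last, ← htop]; rfl
  | cast i => simp [appendMap, Fin.snoc_castSucc, lowerMapAt]

/-- Restriction of a chain to the simplices with top vertex `c`, with `c` removed. -/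
noncomputable def restrictTop {K : Type*} [CommRing K] {u c : α} {j : ℕ}
    (z : SimpChains K (Set.Ioo (⊥:α) u) (j+1)) (hc : c ∈ Set.Ioo (⊥:α) u) :
    SimpChains K (Set.Ioo (⊥:α) c) j :=
  Finsupp.comapDomain (appendMap hc) z (appendMap_injective hc).injOn

@[simp] lemma restrictTop_apply {K : Type*} [CommRing K] {u c : α} {j : ℕ}
    (z : SimpChains K (Set.Ioo (⊥:α) u) (j+1)) (hc : c ∈ Set.Ioo (⊥:α) u)
    (τ : OrderedSimplex (Set.Ioo (⊥:α) c) j) :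
    restrictTop z hc τ = z (appendMap hc τ) := rfl

lemma face_apply {s : Set α} {j : ℕ} (σ : OrderedSimplex s (j+1)) (i : Fin (j+1))
    (k : Fin j) : (σ.face i).1 k = σ.1 (i.succAbove k) := rfl

lemma top_face_of_ne_last {s : Set α} {j : ℕ} (σ : OrderedSimplex s (j+2)) {i : Fin (j+2)}
    (h : i ≠ Fin.last (j+1)) : (σ.face i).top = σ.top := by
  show σ.1 (i.succAbove (Fin.last j)) = σ.1 (Fin.last (j+1))
  congr 1
  rw [Fin.succAbove_of_le_castSucc, Fin.succ_last]
  rw [Fin.le_castSucc_iff, Fin.succ_last, Fin.lt_def]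
  have := Fin.val_lt_last h
  simpa using this

lemma top_face_last {s : Set α} {j : ℕ} (σ : OrderedSimplex s (j+2)) :
    (σ.face (Fin.last (j+1))).top = σ.1 (Fin.castSucc (Fin.last j)) := by
  show σ.1 _ = _
  rw [Fin.succAbove_last]

lemma face_last_appendMap {u c : α} (hc : c ∈ Set.Ioo (⊥:α) u) {j : ℕ}
    (τ : OrderedSimplex (Set.Ioo (⊥:α) c) j) :
    (appendMap hc τ).face (Fin.last j) = OrderedSimplex.mono (Ioo_bot_subset hc.2) τ := by
  apply Subtype.ext; funext k
  show (appendMap hc τ).1 ((Fin.last j).succAbove k) = τ.1 k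
  rw [Fin.succAbove_last]
  simp [appendMap, Fin.snoc_castSucc]

lemma eq_appendMap_of_face_last {u c : α} (hc : c ∈ Set.Ioo (⊥:α) u) {j : ℕ}
    {σ : OrderedSimplex (Set.Ioo (⊥:α) u) (j+1)} {τ : OrderedSimplex (Set.Ioo (⊥:α) c) j}
    (hface : σ.face (Fin.last j) = OrderedSimplex.mono (Ioo_bot_subset hc.2) τ)
    (htop : σ.top = c) : σ = appendMap hc τ := by
  apply Subtype.ext; funext i
  induction i using Fin.lastCases with
  | last =>
    show σ.top = _
    rw [htop]; simp [appendMap, Fin.snoc_last]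
  | cast i =>
    have h1 : σ.1 i.castSucc = (σ.face (Fin.last j)).1 i := by
      rw [face_apply, Fin.succAbove_last]
    rw [h1, hface]
    simp [appendMap, Fin.snoc_castSucc, OrderedSimplex.mono]

lemma face_castSucc_appendMap {u c : α} (hc : c ∈ Set.Ioo (⊥:α) u) {j : ℕ}
    (τ : OrderedSimplex (Set.Ioo (⊥:α) c) (j+1)) (i : Fin (j+1)) :
    (appendMap hc τ).face i.castSucc = appendMap hc (τ.face i) := by
  apply Subtype.ext; funext k
  induction k using Fin.lastCases with
  | last =>
    show (appendMap hc τ).1 (i.castSucc.succAbove (Fin.last j)) = _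
    rw [Fin.succAbove_of_le_castSucc _ _ (by
      simpa [Fin.le_castSucc_iff, Fin.succ_last, Fin.lt_def] using i.isLt), Fin.succ_last]
    simp [appendMap, Fin.snoc_last]
  | cast k =>
    show (appendMap hc τ).1 (i.castSucc.succAbove k.castSucc) = _
    rw [Fin.castSucc_succAbove_castSucc]
    simp [appendMap, Fin.snoc_castSucc]
    rfl

open scoped Classical in
lemma simpBoundary_apply {K : Type*} [CommRing K] {s : Set α} {j : ℕ}
    (z : SimpChains K s (j+1)) (τ : OrderedSimplex s j) :
    simpBoundary K s j z τ =
      ∑ σ ∈ z.support, ∑ i : Fin (j+1),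
        (if σ.face i = τ then (-1:K)^(i:ℕ) * z σ else 0) := by
  rw [simpBoundary, Finsupp.lsum_apply, Finsupp.sum, Finsupp.finset_sum_apply]
  refine Finset.sum_congr rfl fun σ _ => ?_
  rw [LinearMap.sum_apply, Finsupp.finset_sum_apply]
  refine Finset.sum_congr rfl fun i _ => ?_
  rw [LinearMap.smul_apply, Finsupp.lsingle_apply, Finsupp.smul_apply, Finsupp.single_apply]
  split <;> simp [mul_comm]

lemma grade_top_simplex {u : α} {r : ℕ} (hu : grade ℕ u = r + 2)
    (σ : OrderedSimplex (Set.Ioo (⊥:α) u) (r+1)) : grade ℕ σ.top = r + 1 := by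
  have := grade_pattern hu σ (Fin.last r)
  simpa [OrderedSimplex.top] using this

open scoped Classical in
/-- The part of the cycle condition for `z` at a full chain `τ` of ranks `1,…,r+1`. -/
lemma cycle_sum_top {K : Type*} [Field K] {u : α} {r : ℕ} (hu : grade ℕ u = r + 3)
    (z : SimpChains K (Set.Ioo (⊥:α) u) (r+2))
    (hz : simpBoundary K (Set.Ioo (⊥:α) u) (r+1) z = 0)
    (τ : OrderedSimplex (Set.Ioo (⊥:α) u) (r+1)) (hτ : grade ℕ τ.top = r + 1) :
    ∑ σ ∈ z.support.filter (fun σ => σ.face (Fin.last (r+1)) = τ), z σ = 0 := by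
  have h0 : simpBoundary K (Set.Ioo (⊥:α) u) (r+1) z τ = 0 := by rw [hz]; rfl
  rw [simpBoundary_apply] at h0
  have hstep : ∀ σ ∈ z.support,
      (∑ i : Fin (r+2), if σ.face i = τ then (-1:K)^(i:ℕ) * z σ else 0) =
      (if σ.face (Fin.last (r+1)) = τ then (-1:K)^(r+1) * z σ else 0) := by
    intro σ _
    rw [Fin.sum_univ_castSucc]
    have hzero : ∀ i : Fin (r+1),
        (if σ.face i.castSucc = τ then (-1:K)^((i.castSucc : Fin (r+2)):ℕ) * z σ else 0) = 0 := by
      intro i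
      rw [if_neg]
      intro hface
      have h1 : (σ.face i.castSucc).top = σ.top :=
        top_face_of_ne_last σ (by simp [Fin.ext_iff]; omega)
      have h2 : grade ℕ σ.top = r + 2 := by
        have := grade_pattern hu σ (Fin.last (r+1))
        simpa [OrderedSimplex.top] using this
      rw [hface] at h1
      rw [h1, h2] at hτ
      omega
    rw [Finset.sum_congr rfl (fun i _ => hzero i), Finset.sum_const_zero, zero_add]
    simp
  rw [Finset.sum_congr rfl hstep] at h0
  have hrw : ∀ σ ∈ z.support,
      (if σ.face (Fin.last (r+1)) = τ then (-1:K)^(r+1) * z σ else 0) =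
      (-1:K)^(r+1) * (if σ.face (Fin.last (r+1)) = τ then z σ else 0) := by
    intro σ _; split <;> simp
  rw [Finset.sum_congr rfl hrw, ← Finset.mul_sum] at h0
  rcases mul_eq_zero.mp h0 with h | h
  · exact absurd h (pow_ne_zero _ (by norm_num))
  · rw [Finset.sum_filter]; exact h

lemma mem_support_restrictTop {K : Type*} [CommRing K] {u c : α} {j : ℕ}
    (z : SimpChains K (Set.Ioo (⊥:α) u) (j+1)) (hc : c ∈ Set.Ioo (⊥:α) u)
    (τ : OrderedSimplex (Set.Ioo (⊥:α) c) j) :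
    τ ∈ (restrictTop z hc).support ↔ appendMap hc τ ∈ z.support := by
  simp [Finsupp.mem_support_iff]

open scoped Classical in
/-- The restriction of a top-dimensional cycle to a coatom is a cycle. -/
lemma boundary_restrictTop {K : Type*} [Field K] {u c : α} {r : ℕ}
    (hu : grade ℕ u = r + 3)
    (z : SimpChains K (Set.Ioo (⊥:α) u) (r+2))
    (hz : simpBoundary K (Set.Ioo (⊥:α) u) (r+1) z = 0)
    (hc : c ∈ Set.Ioo (⊥:α) u) (hgc : grade ℕ c = r + 2) :
    simpBoundary K (Set.Ioo (⊥:α) c) r (restrictTop z hc) = 0 := by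
  ext τ''
  rw [simpBoundary_apply, Finsupp.coe_zero, Pi.zero_apply]
  have h0 : simpBoundary K (Set.Ioo (⊥:α) u) (r+1) z (appendMap hc τ'') = 0 := by
    rw [hz]; rfl
  rw [simpBoundary_apply] at h0
  -- terms of h0 with top ≠ c vanish
  have hfilter : ∀ σ ∈ z.support, σ.top ≠ c →
      (∑ i : Fin (r+2), if σ.face i = appendMap hc τ'' then (-1:K)^(i:ℕ) * z σ else 0) = 0 := by
    intro σ _ htop
    refine Finset.sum_eq_zero fun i _ => ?_
    rw [if_neg]
    intro hface
    rcases eq_or_ne i (Fin.last (r+1)) with hi | hi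
    · -- then σ contains c strictly below its top, contradicting grades
      subst hi
      have h1 : (σ.face (Fin.last (r+1))).top = σ.1 (Fin.castSucc (Fin.last r)) :=
        top_face_last σ
      rw [hface, appendMap_top] at h1
      have h2 : σ.1 (Fin.castSucc (Fin.last r)) < σ.top :=
        σ.2.1 (Fin.castSucc_lt_last _)
      rw [← h1] at h2
      have h3 := grade_strictMono (α := α) (𝕆 := ℕ) h2
      have h4 := grade_strictMono (α := α) (𝕆 := ℕ) ((σ.2.2 (Fin.last (r+1))).2)
      rw [hgc] at h3
      rw [hu] at h4
      have : grade ℕ σ.top = r + 2 + 1 ∨ grade ℕ σ.top > r + 3 := by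
        change grade ℕ (σ.1 (Fin.last (r+1))) < r + 3 at h4
        change grade ℕ (σ.1 (Fin.last (r+1))) > r + 2 at h3
        omega
      have := grade_pattern hu σ (Fin.last (r+1))
      change grade ℕ σ.top = _ at this
      simp at this
      omega
    · have h1 : (σ.face i).top = σ.top := top_face_of_ne_last σ hi
      rw [hface, appendMap_top] at h1
      exact htop h1.symm
  have hmain : ∑ σ ∈ z.support, (∑ i : Fin (r+2),
      if σ.face i = appendMap hc τ'' then (-1:K)^(i:ℕ) * z σ else 0) =
      ∑ τ ∈ (restrictTop z hc).support, (∑ i : Fin (r+1),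
      if τ.face i = τ'' then (-1:K)^(i:ℕ) * restrictTop z hc τ else 0) := by
    rw [← Finset.sum_filter_of_ne (p := fun σ => σ.top = c)
      (fun σ hσ hne => by by_contra h; exact hne (hfilter σ hσ h))]
    refine (Finset.sum_bij (fun τ _ => appendMap hc τ) ?_ ?_ ?_ ?_).symm
    · intro τ hτ
      rw [Finset.mem_filter]
      exact ⟨(mem_support_restrictTop z hc τ).mp hτ, appendMap_top hc τ⟩
    · intro a _ b _ h; exact appendMap_injective hc h
    · intro σ hσ
      rw [Finset.mem_filter] at hσ
      refine ⟨lowerMapAt σ (mem_Ioo_top σ hσ.2), ?_, ?_⟩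
      · rw [mem_support_restrictTop, appendMap_lowerMapAt σ hσ.2 hc]; exact hσ.1
      · exact appendMap_lowerMapAt σ hσ.2 hc
    · intro τ hτ
      show (∑ i : Fin (r+1), if τ.face i = τ'' then (-1:K)^(i:ℕ) * restrictTop z hc τ else 0)
        = ∑ i : Fin (r+2), if (appendMap hc τ).face i = appendMap hc τ''
            then (-1:K)^(i:ℕ) * z (appendMap hc τ) else 0
      rw [Fin.sum_univ_castSucc (n := r+1)]
      have hlast : (if (appendMap hc τ).face (Fin.last (r+1)) = appendMap hc τ''
          then (-1:K)^(((Fin.last (r+1)) : Fin (r+2)):ℕ) * z (appendMap hc τ) else 0) = 0 := by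
        rw [if_neg]
        intro hface
        have := congrArg OrderedSimplex.top hface
        rw [face_last_appendMap, appendMap_top] at this
        have h2 : (OrderedSimplex.mono (Ioo_bot_subset hc.2) τ).top = τ.top := rfl
        rw [h2] at this
        have h3 : τ.top < c := (τ.2.2 (Fin.last r)).2
        rw [this] at h3
        exact lt_irrefl _ h3
      rw [hlast, add_zero]
      refine Finset.sum_congr rfl fun i _ => ?_
      rw [face_castSucc_appendMap]
      have hiff : appendMap hc (τ.face i) = appendMap hc τ'' ↔ τ.face i = τ'' :=
        ⟨fun h => appendMap_injective hc h, fun h => by rw [h]⟩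
      rw [restrictTop_apply]
      simp only [Fin.coe_castSucc]
      split
      · rw [if_pos ((by assumption : τ.face i = τ'') ▸ rfl)]
      · rw [if_neg (fun h => (by assumption : ¬ _) (hiff.mp h))]
  rw [hmain] at h0
  exact h0

lemma simpCycles_succ {K : Type*} [CommRing K] (s : Set α) (j : ℕ) :
    simpCycles K s (j+1) = LinearMap.ker (simpBoundary K s j) := rfl

instance {s : Set α} : Subsingleton (OrderedSimplex s 0) :=
  ⟨fun a b => Subtype.ext (funext fun i => i.elim0)⟩

/-- The empty simplex. -/
def emptySimplex (s : Set α) : OrderedSimplex s 0 :=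
  ⟨Fin.elim0, fun a => a.elim0, fun i => i.elim0⟩

lemma mem_topFinset {K : Type*} [CommRing K] {s : Set α} {j : ℕ}
    {z : SimpChains K s (j+1)} {c : α} :
    c ∈ topFinset z ↔ ∃ σ ∈ z.support, σ.top = c := by
  classical
  simp [topFinset]

lemma clause2 {K : Type*} [Field K] {r : ℕ} {u : α} (hu : grade ℕ u = r + 2)
    (z : SimpChains K (Set.Ioo (⊥:α) u) (r+1))
    (hz : simpBoundary K (Set.Ioo (⊥:α) u) r z = 0) :
    ∀ c ∈ topFinset z, grade ℕ c = r + 1 ∧ ∃ hc : c ∈ Set.Ioo (⊥:α) u,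
      restrictTop z hc ≠ 0 ∧ restrictTop z hc ∈ simpCycles K (Set.Ioo (⊥:α) c) r := by
  intro c hcT
  obtain ⟨σ₀, hσ₀, htop⟩ := mem_topFinset.mp hcT
  have hgc : grade ℕ c = r + 1 := htop ▸ grade_top_simplex hu σ₀
  have hc : c ∈ Set.Ioo (⊥:α) u := htop ▸ σ₀.2.2 (Fin.last r)
  refine ⟨hgc, hc, ?_, ?_⟩
  · intro h0
    have h1 : restrictTop z hc (lowerMapAt σ₀ (mem_Ioo_top σ₀ htop)) = 0 := by rw [h0]; rfl
    rw [restrictTop_apply, appendMap_lowerMapAt σ₀ htop hc] at h1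
    exact (Finsupp.mem_support_iff.mp hσ₀) h1
  · cases r with
    | zero => exact Submodule.mem_top
    | succ r' =>
      rw [simpCycles_succ, LinearMap.mem_ker]
      exact boundary_restrictTop hu z hz hc hgc

lemma lemmaA {K : Type*} [Field K] (r : ℕ) : ∀ (u : α), grade ℕ u = r + 2 →
    ∀ z : SimpChains K (Set.Ioo (⊥:α) u) (r+1),
      simpBoundary K (Set.Ioo (⊥:α) u) r z = 0 → z ≠ 0 →
      r + 2 ≤ (topFinset z).card ∧
      ∀ c ∈ topFinset z, grade ℕ c = r + 1 ∧ ∃ hc : c ∈ Set.Ioo (⊥:α) u,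
        restrictTop z hc ≠ 0 ∧ restrictTop z hc ∈ simpCycles K (Set.Ioo (⊥:α) c) r := by
  induction r with
  | zero =>
    intro u hu z hz h0
    refine ⟨?_, clause2 hu z hz⟩
    classical
    have hinj : Set.InjOn OrderedSimplex.top
        (z.support : Set (OrderedSimplex (Set.Ioo (⊥:α) u) (0+1))) := by
      intro a _ b _ h
      refine Subtype.ext (funext fun i => ?_)
      have hi : i = Fin.last 0 := by
        apply Fin.ext
        have := i.isLt
        simp only [Fin.val_last]
        omega
      rw [hi]; exact h
    have hcard : (topFinset z).card = z.support.card := Finset.card_image_of_injOn hinj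
    rw [hcard]
    by_contra hlt
    have hne : z.support.Nonempty := Finsupp.support_nonempty_iff.mpr h0
    have h1 : z.support.card = 1 := by
      have := hne.card_pos; omega
    obtain ⟨σ₀, hs⟩ := Finset.card_eq_one.mp h1
    have he : simpBoundary K (Set.Ioo (⊥:α) u) 0 z (emptySimplex _) = 0 := by rw [hz]; rfl
    rw [simpBoundary_apply, hs, Finset.sum_singleton, Fin.sum_univ_one,
      if_pos (Subsingleton.elim _ _)] at he
    norm_num at he
    have : σ₀ ∈ z.support := by rw [hs]; exact Finset.mem_singleton_self σ₀
    exact Finsupp.mem_support_iff.mp this he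
  | succ r ih =>
    intro u hu z hz h0
    have hcl2 := clause2 hu z hz
    refine ⟨?_, hcl2⟩
    classical
    have hne : z.support.Nonempty := Finsupp.support_nonempty_iff.mpr h0
    obtain ⟨σ₀, hσ₀⟩ := hne
    set c₁ := σ₀.top with hc₁def
    have hc₁T : c₁ ∈ topFinset z := mem_topFinset.mpr ⟨σ₀, hσ₀, rfl⟩
    obtain ⟨hgc₁, hc₁, hw0, hwcyc⟩ := hcl2 c₁ hc₁T
    set w := restrictTop z hc₁ with hwdef
    have hwbd : simpBoundary K (Set.Ioo (⊥:α) c₁) r w = 0 := by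
      rw [simpCycles_succ, LinearMap.mem_ker] at hwcyc; exact hwcyc
    obtain ⟨hwcard, hwcl2⟩ := ih c₁ hgc₁ w hwbd hw0
    have hkey : ∀ t ∈ topFinset w, ∃ c, (c ∈ topFinset z ∧ c ≠ c₁) ∧ t = c ⊓ c₁ := by
      intro t htT
      obtain ⟨τ', hτ', hτtop⟩ := mem_topFinset.mp htT
      have hτgrade : grade ℕ t = r + 1 := (hwcl2 t htT).1
      set τ : OrderedSimplex (Set.Ioo (⊥:α) u) (r+1) :=
        OrderedSimplex.mono (Ioo_bot_subset hc₁.2) τ' with hτdef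
      have hτtop' : τ.top = t := hτtop
      have hsum := cycle_sum_top hu z hz τ (by rw [hτtop']; exact hτgrade)
      set σ₁ := appendMap hc₁ τ' with hσ₁def
      have hσ₁mem : σ₁ ∈ z.support.filter (fun σ => σ.face (Fin.last (r+1)) = τ) := by
        rw [Finset.mem_filter]
        exact ⟨(mem_support_restrictTop z hc₁ τ').mp hτ', face_last_appendMap hc₁ τ'⟩
      have hzσ₁ : z σ₁ ≠ 0 :=
        Finsupp.mem_support_iff.mp (Finset.mem_filter.mp hσ₁mem).1
      have hex : ∃ σ' ∈ z.support.filter (fun σ => σ.face (Fin.last (r+1)) = τ),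
          σ' ≠ σ₁ ∧ z σ' ≠ 0 := by
        by_contra hcon
        push_neg at hcon
        have hsingle : ∑ σ ∈ z.support.filter (fun σ => σ.face (Fin.last (r+1)) = τ), z σ
            = z σ₁ :=
          Finset.sum_eq_single_of_mem σ₁ hσ₁mem (fun b hb hbne => hcon b hb hbne)
        rw [hsum] at hsingle
        exact hzσ₁ hsingle.symm
      obtain ⟨σ', hσ'f, hσ'ne, hzσ'⟩ := hex
      obtain ⟨hσ'supp, hσ'face⟩ := Finset.mem_filter.mp hσ'f
      set c := σ'.top with hcdef
      have hcT : c ∈ topFinset z := mem_topFinset.mpr ⟨σ', hσ'supp, rfl⟩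
      have hgc : grade ℕ c = r + 2 := (hcl2 c hcT).1
      have hcne : c ≠ c₁ := by
        intro h
        exact hσ'ne (eq_appendMap_of_face_last hc₁ hσ'face h)
      have htc : t < c := by
        have h1 : (σ'.face (Fin.last (r+1))).top = σ'.1 (Fin.castSucc (Fin.last r)) :=
          top_face_last σ'
        rw [hσ'face] at h1
        have h2 : σ'.1 (Fin.castSucc (Fin.last r)) < σ'.top := σ'.2.1 (Fin.castSucc_lt_last _)
        rw [← h1, hτtop'] at h2
        exact h2
      have htc₁ : t < c₁ := by rw [← hτtop]; exact (τ'.2.2 (Fin.last r)).2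
      have hinfle : t ≤ c ⊓ c₁ := le_inf htc.le htc₁.le
      have hinflt : c ⊓ c₁ < c := by
        rcases lt_or_eq_of_le (inf_le_left : c ⊓ c₁ ≤ c) with h | h
        · exact h
        · exfalso
          have hcc : c ≤ c₁ := by rw [← h]; exact inf_le_right
          rcases lt_or_eq_of_le hcc with h' | h'
          · have := grade_strictMono (α := α) (𝕆 := ℕ) h'
            rw [hgc, hgc₁] at this; omega
          · exact hcne h'
      have hgi : grade ℕ (c ⊓ c₁) < r + 2 := by
        have := grade_strictMono (α := α) (𝕆 := ℕ) hinflt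
        rw [hgc] at this; omega
      have hteq : t = c ⊓ c₁ := by
        rcases eq_or_lt_of_le hinfle with h | h
        · exact h
        · have := grade_strictMono (α := α) (𝕆 := ℕ) h
          rw [hτgrade] at this; omega
      exact ⟨c, ⟨hcT, hcne⟩, hteq⟩
    set f : α → α := fun t =>
      if h : ∃ c, (c ∈ topFinset z ∧ c ≠ c₁) ∧ t = c ⊓ c₁ then h.choose else c₁ with hfdef
    have hf : ∀ t ∈ topFinset w, (f t ∈ topFinset z ∧ f t ≠ c₁) ∧ t = f t ⊓ c₁ := by
      intro t ht
      have h := hkey t ht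
      have : f t = h.choose := dif_pos h
      rw [this]
      exact h.choose_spec
    have hcard : (topFinset w).card ≤ ((topFinset z).erase c₁).card := by
      apply Finset.card_le_card_of_injOn f
      · intro t ht
        exact Finset.mem_erase.mpr ⟨(hf t ht).1.2, (hf t ht).1.1⟩
      · intro a ha b hb hab
        rw [(hf a ha).2, (hf b hb).2, hab]
    rw [Finset.card_erase_of_mem hc₁T] at hcard
    have hc₁pos : 0 < (topFinset z).card := Finset.card_pos.mpr ⟨c₁, hc₁T⟩
    omega

lemma isEmpty_long {c : α} {j : ℕ} (hc : grade ℕ c ≤ j + 1) :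
    IsEmpty (OrderedSimplex (Set.Ioo (⊥:α) c) (j+1)) := by
  constructor
  intro σ
  have hpos : ∀ k : Fin (j+1), 1 ≤ grade ℕ (σ.1 k) := by
    intro k
    have := grade_strictMono (α := α) (𝕆 := ℕ) (σ.2.2 k).1
    rw [grade_bot'] at this; omega
  have hsm : StrictMono (fun k : Fin (j+1) => grade ℕ (σ.1 k) - 1) := by
    intro a b hab
    show grade ℕ (σ.1 a) - 1 < grade ℕ (σ.1 b) - 1
    have h1 := grade_strictMono (α := α) (𝕆 := ℕ) (σ.2.1 hab)
    have := hpos a; have := hpos b; omega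
  have h1 : (j : ℕ) ≤ grade ℕ (σ.1 (Fin.last j)) - 1 := by
    have := fin_le_strictMono hsm (Fin.last j)
    simpa using this
  have h2 := grade_strictMono (α := α) (𝕆 := ℕ) (σ.2.2 (Fin.last j)).2
  have := hpos (Fin.last j)
  omega

lemma good_of_cycle {K : Type*} [Field K] {c : α} {j : ℕ} (hgc : grade ℕ c = j + 1)
    (w : SimpChains K (Set.Ioo (⊥:α) c) j) (hw0 : w ≠ 0)
    (hwc : w ∈ simpCycles K (Set.Ioo (⊥:α) c) j) :
    Nontrivial (ReducedHomology K (Set.Ioo (⊥:α) c) j) := by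
  have hempty : IsEmpty (OrderedSimplex (Set.Ioo (⊥:α) c) (j+1)) := isEmpty_long (by omega)
  show Nontrivial (↥(simpCycles K (Set.Ioo (⊥:α) c) j) ⧸
    (simpBoundaries K (Set.Ioo (⊥:α) c) j).comap (simpCycles K (Set.Ioo (⊥:α) c) j).subtype)
  refine ⟨Submodule.Quotient.mk ⟨w, hwc⟩, 0, ?_⟩
  intro h
  rw [Submodule.Quotient.mk_eq_zero, Submodule.mem_comap] at h
  obtain ⟨y, hy⟩ := h
  have hy0 : y = 0 := by
    ext σ
    exact (hempty.false σ).elim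
  rw [hy0, map_zero] at hy
  exact hw0 (by rw [← (show _ = w from congrArg Subtype.val (rfl : (⟨w, hwc⟩ : ↥(simpCycles K (Set.Ioo (⊥:α) c) j)) = ⟨w, hwc⟩))]; exact hy.symm)

lemma exists_cycle {K : Type*} [CommRing K] {s : Set α} {j : ℕ}
    (h : Nontrivial (ReducedHomology K s j)) :
    ∃ z : SimpChains K s j, z ≠ 0 ∧ z ∈ simpCycles K s j := by
  have h' : Nontrivial (↥(simpCycles K s j) ⧸
      (simpBoundaries K s j).comap (simpCycles K s j).subtype) := h
  obtain ⟨x, y, hxy⟩ := h'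
  have hq : ∃ q : ↥(simpCycles K s j) ⧸
      (simpBoundaries K s j).comap (simpCycles K s j).subtype, q ≠ 0 := by
    rcases eq_or_ne x 0 with hx | hx
    · exact ⟨y, fun hy => hxy (hx.trans hy.symm)⟩
    · exact ⟨x, hx⟩
  obtain ⟨q, hq0⟩ := hq
  obtain ⟨z, rfl⟩ := Submodule.Quotient.mk_surjective _ q
  refine ⟨z.1, ?_, z.2⟩
  intro hz
  apply hq0
  have : z = 0 := Subtype.ext hz
  rw [this, Submodule.Quotient.mk_eq_zero]
  exact Submodule.zero_mem _

end Aux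

/-- **Step 3.**  A finite graded lattice `L` of rank `n ≥ 1` with
`H̃_{n-2}(Δ(L̄); K) ≠ 0` has at least `n` good coatoms, i.e. elements `c` of rank
`n - 1` with `H̃_{n-3}(Δ(⊥,c); K) ≠ 0` (for `n = 1` the single coatom `⊥` counts
vacuously). -/
theorem good_coatoms_count
    (n : ℕ) (hn : 1 ≤ n)
    (α : Type*) [Lattice α] [BoundedOrder α] [Fintype α] [GradeMinOrder ℕ α]
    (hrank : grade ℕ (⊤ : α) = n)
    (K : Type*) [Field K]
    (hH : Nontrivial (ReducedHomology K (properPart α) (n - 1))) :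
    n ≤ Nat.card {c : α // grade ℕ c = n - 1 ∧
        (c = ⊥ ∨ Nontrivial (ReducedHomology K (Set.Ioo (⊥ : α) c) (n - 2)))} := by
  classical
  rcases Nat.lt_or_ge n 2 with h2 | h2
  · have hn1 : n = 1 := by omega
    subst hn1
    have hne : Nonempty {c : α // grade ℕ c = 1 - 1 ∧
        (c = ⊥ ∨ Nontrivial (ReducedHomology K (Set.Ioo (⊥ : α) c) (1 - 2)))} :=
      ⟨⟨⊥, by simpa using grade_bot', Or.inl rfl⟩⟩
    have hfin : Finite {c : α // grade ℕ c = 1 - 1 ∧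
        (c = ⊥ ∨ Nontrivial (ReducedHomology K (Set.Ioo (⊥ : α) c) (1 - 2)))} :=
      Subtype.finite
    exact Nat.one_le_iff_ne_zero.mpr (Nat.card_ne_zero.mpr ⟨hne, hfin⟩)
  · obtain ⟨N, rfl⟩ : ∃ N, n = N + 2 := ⟨n - 2, by omega⟩
    have hsets : properPart α = Set.Ioo (⊥:α) ⊤ := by
      ext x
      simp [properPart, Set.mem_Ioo, bot_lt_iff_ne_bot, lt_top_iff_ne_top]
    have e1 : N + 2 - 1 = N + 1 := by omega
    have e2 : N + 2 - 2 = N := by omega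
    rw [hsets, e1] at hH
    simp only [e1, e2]
    obtain ⟨z, hz0, hzc⟩ := exists_cycle hH
    have hzb : simpBoundary K (Set.Ioo (⊥:α) ⊤) N z = 0 := by
      rw [simpCycles_succ, LinearMap.mem_ker] at hzc; exact hzc
    obtain ⟨hcard, hcl⟩ := lemmaA N ⊤ hrank z hzb hz0
    set P : α → Prop := fun c => grade ℕ c = N + 1 ∧
      (c = ⊥ ∨ Nontrivial (ReducedHomology K (Set.Ioo (⊥ : α) c) N)) with hP
    have hsub : topFinset z ⊆ Finset.univ.filter P := by
      intro c hc
      obtain ⟨hg, hcIoo, hw0, hwc⟩ := hcl c hc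
      rw [Finset.mem_filter]
      exact ⟨Finset.mem_univ _, hg,
        Or.inr (good_of_cycle hg (restrictTop z hcIoo) hw0 hwc)⟩
    have hcount : Nat.card {c : α // P c} = (Finset.univ.filter P).card := by
      rw [Nat.card_eq_fintype_card, Fintype.card_subtype]
    calc N + 2 ≤ (topFinset z).card := hcard
      _ ≤ (Finset.univ.filter P).card := Finset.card_le_card hsub
      _ = Nat.card {c : α // P c} := hcount.symm
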